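/- Key Lemma: every parallel reduction step can be sequentialized: if M ⇒ M', then there exist terms L and N such that M head-β_v-reduces (several steps) to L, L head-σ-reduces (several steps) to N, and N ⇛ⁱ M'. -/

import Mathlib

/-- Terms of the call-by-value λ-calculus, in de Bruijn notation. -/
inductive Term : Type
  | var : ℕ → Term
  | lam : Term → Term
  | app : Term → Term → Term

namespace Term

/-- Values are variables and abstractions. -/
def isValue : Term → Prop
  | var _ => True
  | lam _ => True
  | app _ _ => False

/-- Shift free de Bruijn indices ≥ d by one. -/
def lift (d : ℕ) : Term → Term
  | var n => if n < d then var n else var (n+1)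
  | lam M => lam (lift (d+1) M)
  | app M N => app (lift d M) (lift d N)

/-- Capture-avoiding substitution of `V` for index `k`. -/
def subst : Term → ℕ → Term → Term
  | var n, k, V => if n = k then V else if k < n then var (n-1) else var n
  | lam M, k, V => lam (subst M (k+1) (lift 0 V))
  | app M N, k, V => app (subst M k V) (subst N k V)

/-- Apply a term to a list of arguments: `appList M [M₁,…,Mₘ] = M M₁ … Mₘ`. -/
def appList : Term → List Term → Term
  | M, [] => M
  | M, N :: Ns => appList (app M N) Ns

/-- Root σ-reduction rules σ₁ and σ₃ (freshness handled by lifting). -/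
inductive SigmaBase : Term → Term → Prop
  | sigma1 (M N L : Term) :
      SigmaBase (app (app (lam M) N) L) (app (lam (app M (lift 0 L))) N)
  | sigma3 (V L N : Term) : isValue V →
      SigmaBase (app V (app (lam L) N)) (app (lam (app (lift 0 V) L)) N)

/-- Root rules of v-reduction: β_v, σ₁ and σ₃. -/
inductive VBase : Term → Term → Prop
  | beta (M V : Term) : isValue V → VBase (app (lam M) V) (subst M 0 V)
  | sigma1 (M N L : Term) :
      VBase (app (app (lam M) N) L) (app (lam (app M (lift 0 L))) N)
  | sigma3 (V L N : Term) : isValue V →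
      VBase (app V (app (lam L) N)) (app (lam (app (lift 0 V) L)) N)

/-- Contextual closure of a root relation. -/
inductive Ctx (r : Term → Term → Prop) : Term → Term → Prop
  | base {M M'} : r M M' → Ctx r M M'
  | lam {M M'} : Ctx r M M' → Ctx r (lam M) (lam M')
  | appL {M M'} (N : Term) : Ctx r M M' → Ctx r (app M N) (app M' N)
  | appR (M : Term) {N N'} : Ctx r N N' → Ctx r (app M N) (app M N')

/-- σ-reduction: contextual closure of σ₁ ∪ σ₃. -/
def SigmaRed : Term → Term → Prop := Ctx SigmaBase

/-- v-reduction: contextual closure of β_v ∪ σ₁ ∪ σ₃. -/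
def Red : Term → Term → Prop := Ctx VBase

/-- Head β_v-reduction. -/
inductive HeadBeta : Term → Term → Prop
  | beta (M V : Term) (Ms : List Term) : isValue V →
      HeadBeta (appList (app (lam M) V) Ms) (appList (subst M 0 V) Ms)
  | right (V : Term) {N N'} (Ms : List Term) : isValue V → HeadBeta N N' →
      HeadBeta (appList (app V N) Ms) (appList (app V N') Ms)

/-- Head σ-reduction. -/
inductive HeadSigma : Term → Term → Prop
  | sigma1 (M N L : Term) (Ms : List Term) :
      HeadSigma (appList (app (app (lam M) N) L) Ms)
                (appList (app (lam (app M (lift 0 L))) N) Ms)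
  | sigma3 (V L N : Term) (Ms : List Term) : isValue V →
      HeadSigma (appList (app V (app (lam L) N)) Ms)
                (appList (app (lam (app (lift 0 V) L)) N) Ms)
  | right (V : Term) {N N'} (Ms : List Term) : isValue V → HeadSigma N N' →
      HeadSigma (appList (app V N) Ms) (appList (app V N') Ms)

/-- Head v-reduction: head β_v ∪ head σ. -/
def HeadRed (M N : Term) : Prop := HeadBeta M N ∨ HeadSigma M N

/-- Internal v-reduction: v-steps that are not head v-steps. -/
def IntRed (M N : Term) : Prop := Red M N ∧ ¬ HeadRed M N

/-- Parallel reduction of the shuffling calculus λ_v^σ. -/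
inductive Par : Term → Term → Prop
  | var (x : ℕ) {Ms Ms' : List Term} : List.Forall₂ Par Ms Ms' →
      Par (appList (var x) Ms) (appList (var x) Ms')
  | lam {M M'} {Ms Ms' : List Term} : Par M M' → List.Forall₂ Par Ms Ms' →
      Par (appList (lam M) Ms) (appList (lam M') Ms')
  | beta {M M' V V'} {Ms Ms' : List Term} : isValue V → isValue V' →
      Par M M' → Par V V' → List.Forall₂ Par Ms Ms' →
      Par (appList (app (lam M) V) Ms) (appList (subst M' 0 V') Ms')
  | sigma1 {M M' N N' L L'} {Ms Ms' : List Term} :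
      Par M M' → Par N N' → Par L L' → List.Forall₂ Par Ms Ms' →
      Par (appList (app (app (lam M) N) L) Ms)
          (appList (app (lam (app M' (lift 0 L'))) N') Ms')
  | sigma3 {V V' L L' N N'} {Ms Ms' : List Term} : isValue V → isValue V' →
      Par V V' → Par L L' → Par N N' → List.Forall₂ Par Ms Ms' →
      Par (appList (app V (app (lam L) N)) Ms)
          (appList (app (lam (app (lift 0 V') L')) N') Ms')

/-- Internal parallel reduction. -/
inductive IPar : Term → Term → Prop
  | lam {N N'} : Par N N' → IPar (lam N) (lam N')
  | var (x : ℕ) : IPar (var x) (var x)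
  | right {V V' N N'} {Ms Ms' : List Term} : isValue V → isValue V' →
      Par V V' → IPar N N' → List.Forall₂ Par Ms Ms' →
      IPar (appList (app V N) Ms) (appList (app V' N') Ms')

/-- One-hole contexts. -/
inductive Ctx1 : Type
  | hole : Ctx1
  | lam : Ctx1 → Ctx1
  | appL : Ctx1 → Term → Ctx1
  | appR : Term → Ctx1 → Ctx1

/-- Capture-allowing hole filling. -/
def fill : Ctx1 → Term → Term
  | .hole, M => M
  | .lam C, M => lam (fill C M)
  | .appL C N, M => app (fill C M) N
  | .appR N C, M => app N (fill C M)

/-- `M` halts: head β_v-reduction from `M` reaches a value. -/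
def Halts (M : Term) : Prop := ∃ V, isValue V ∧ Relation.ReflTransGen HeadBeta M V

end Term

namespace Term

/-! ### Size -/

def size : Term → ℕ
  | var _ => 1
  | lam M => size M + 1
  | app M N => size M + size N + 1

theorem appList_append (A : Term) (Ns Ms : List Term) :
    appList A (Ns ++ Ms) = appList (appList A Ns) Ms := by
  induction Ns generalizing A with
  | nil => rfl
  | cons N Ns ih => exact ih (app A N)

theorem size_le_appList (A : Term) (Ms : List Term) : size A ≤ size (appList A Ms) := by
  induction Ms generalizing A with
  | nil => exact le_refl _
  | cons N Ms ih =>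
    exact le_trans (by simp only [size]; omega) (ih (app A N))

theorem size_mem_lt (A : Term) {a : Term} {Ms : List Term} (ha : a ∈ Ms) :
    size a < size (appList A Ms) := by
  induction Ms generalizing A with
  | nil => cases ha
  | cons N Ms ih =>
    rcases List.mem_cons.mp ha with rfl | ha'
    · exact lt_of_lt_of_le (by simp only [size]; omega) (size_le_appList (app A a) Ms)
    · exact ih (app A N) ha'

theorem size_head_lt (Ms : List Term) {B A : Term} (h : size B < size A) :
    size B < size (appList A Ms) :=
  lt_of_lt_of_le h (size_le_appList A Ms)

/-! ### lift/subst arithmetic -/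

theorem lift_lift (M : Term) : ∀ {d e : ℕ}, d ≤ e →
    lift d (lift e M) = lift (e+1) (lift d M) := by
  induction M with
  | var n =>
    intro d e h
    simp only [lift]
    split_ifs <;> simp only [lift] <;> split_ifs <;>
      first | rfl | (exfalso; omega) | (simp only [var.injEq]; omega)
  | lam M ih =>
    intro d e h
    simp only [lift]
    rw [ih (Nat.succ_le_succ h)]
  | app A B ihA ihB =>
    intro d e h
    simp only [lift]
    rw [ihA h, ihB h]

theorem lift_subst_high (M : Term) : ∀ {k d : ℕ} (V : Term), k ≤ d →
    lift d (subst M k V) = subst (lift (d+1) M) k (lift d V) := by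
  induction M with
  | var n =>
    intro k d V h
    simp only [subst, lift]
    split_ifs <;> simp only [subst, lift] <;> (try split_ifs) <;>
      first | rfl | (exfalso; omega) | (simp only [var.injEq]; omega)
  | lam M ih =>
    intro k d V h
    simp only [subst, lift]
    rw [ih (lift 0 V) (Nat.succ_le_succ h), ← lift_lift V (Nat.zero_le d)]
  | app A B ihA ihB =>
    intro k d V h
    simp only [subst, lift]
    rw [ihA V h, ihB V h]

theorem lift_subst_low (M : Term) : ∀ {d k : ℕ} (V : Term), d ≤ k →
    lift d (subst M k V) = subst (lift d M) (k+1) (lift d V) := by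
  induction M with
  | var n =>
    intro d k V h
    simp only [subst, lift]
    split_ifs <;> simp only [subst, lift] <;> (try split_ifs) <;>
      first | rfl | (exfalso; omega) | (simp only [var.injEq]; omega)
  | lam M ih =>
    intro d k V h
    simp only [subst, lift]
    rw [ih (lift 0 V) (Nat.succ_le_succ h), ← lift_lift V (Nat.zero_le d)]
  | app A B ihA ihB =>
    intro d k V h
    simp only [subst, lift]
    rw [ihA V h, ihB V h]

theorem subst_lift_cancel (M : Term) : ∀ (k : ℕ) (X : Term), subst (lift k M) k X = M := by
  induction M with
  | var n =>
    intro k X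
    simp only [lift]
    split_ifs <;> simp only [subst] <;> split_ifs <;>
      first | rfl | (exfalso; omega) | (simp only [var.injEq]; omega)
  | lam M ih =>
    intro k X
    simp only [lift, subst]
    rw [ih]
  | app A B ihA ihB =>
    intro k X
    simp only [lift, subst]
    rw [ihA, ihB]

theorem subst_subst (M : Term) : ∀ {k j : ℕ} (W V : Term), k ≤ j →
    subst (subst M k W) j V = subst (subst M (j+1) (lift k V)) k (subst W j V) := by
  induction M with
  | var n =>
    intro k j W V h
    simp only [subst]
    split_ifs <;> (try simp only [subst]) <;> (try split_ifs) <;>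
      (try simp only [subst]) <;> (try split_ifs) <;>
      first
      | rfl
      | (exfalso; omega)
      | (simp only [var.injEq]; omega)
      | (rw [subst_lift_cancel])
  | lam M ih =>
    intro k j W V h
    simp only [subst]
    rw [ih (lift 0 W) (lift 0 V) (Nat.succ_le_succ h), ← lift_lift V (Nat.zero_le k),
      ← lift_subst_low W V (Nat.zero_le j)]
  | app A B ihA ihB =>
    intro k j W V h
    simp only [subst]
    rw [ihA W V h, ihB W V h]

/-! ### values -/

theorem isValue_lift {V : Term} (h : isValue V) (d : ℕ) : isValue (lift d V) := by
  cases V with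
  | var n => simp only [lift]; split_ifs <;> trivial
  | lam M => trivial
  | app A B => exact h.elim

theorem isValue_subst {W : Term} (hW : isValue W) {V : Term} (hV : isValue V) (k : ℕ) :
    isValue (subst W k V) := by
  cases W with
  | var n => simp only [subst]; split_ifs <;> first | exact hV | trivial
  | lam M => trivial
  | app A B => exact hW.elim

/-! ### lift/subst on appList -/

theorem lift_appList (d : ℕ) (A : Term) (Ms : List Term) :
    lift d (appList A Ms) = appList (lift d A) (Ms.map (lift d)) := by
  induction Ms generalizing A with
  | nil => rfl
  | cons N Ms ih => simp only [appList, List.map_cons, ih, lift]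

theorem subst_appList (A : Term) (Ms : List Term) (k : ℕ) (V : Term) :
    subst (appList A Ms) k V = appList (subst A k V) (Ms.map (fun N => subst N k V)) := by
  induction Ms generalizing A with
  | nil => rfl
  | cons N Ms ih => simp only [appList, List.map_cons, ih, subst]

/-! ### shapes -/

def isApp : Term → Prop
  | app _ _ => True
  | _ => False

theorem isApp_appList_app (A B : Term) (Ms : List Term) : isApp (appList (app A B) Ms) := by
  induction Ms generalizing A B with
  | nil => trivial
  | cons N Ms ih => exact ih (app A B) N

theorem not_value_appList_app (A B : Term) (Ms : List Term) :
    ¬ isValue (appList (app A B) Ms) := by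
  induction Ms generalizing A B with
  | nil => exact fun h => h
  | cons N Ms ih => exact ih (app A B) N

/-! ### Par combinators -/

theorem appList_snoc (H B : Term) (Ms : List Term) :
    appList H (Ms ++ [B]) = app (appList H Ms) B := by
  rw [appList_append]; rfl

theorem parApp {A A' B B' : Term} (hA : Par A A') (hB : Par B B') :
    Par (app A B) (app A' B') := by
  cases hA with
  | var x hMs =>
    rw [← appList_snoc, ← appList_snoc]
    exact Par.var x (List.rel_append hMs (List.Forall₂.cons hB List.Forall₂.nil))
  | lam hM hMs =>
    rw [← appList_snoc, ← appList_snoc]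
    exact Par.lam hM (List.rel_append hMs (List.Forall₂.cons hB List.Forall₂.nil))
  | beta hv hv' hM hV hMs =>
    rw [← appList_snoc, ← appList_snoc]
    exact Par.beta hv hv' hM hV (List.rel_append hMs (List.Forall₂.cons hB List.Forall₂.nil))
  | sigma1 hM hN hL hMs =>
    rw [← appList_snoc, ← appList_snoc]
    exact Par.sigma1 hM hN hL (List.rel_append hMs (List.Forall₂.cons hB List.Forall₂.nil))
  | sigma3 hv hv' hV hL hN hMs =>
    rw [← appList_snoc, ← appList_snoc]
    exact Par.sigma3 hv hv' hV hL hN (List.rel_append hMs (List.Forall₂.cons hB List.Forall₂.nil))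

theorem parAppList : ∀ {Ms Ms' : List Term} {A A' : Term}, Par A A' →
    List.Forall₂ Par Ms Ms' → Par (appList A Ms) (appList A' Ms') := by
  intro Ms
  induction Ms with
  | nil => intro Ms' A A' h hf; cases hf; exact h
  | cons N Ms ih =>
    intro Ms' A A' h hf
    cases hf with
    | @cons B B' l l' hN hMs => exact ih (A := app A N) (A' := app A' B') (parApp h hN) hMs

theorem forall₂_map {Ms Ms' : List Term} {f g : Term → Term} (h : List.Forall₂ Par Ms Ms')
    (hfg : ∀ a ∈ Ms, ∀ b, Par a b → Par (f a) (g b)) :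
    List.Forall₂ Par (Ms.map f) (Ms'.map g) := by
  induction h with
  | nil => exact List.Forall₂.nil
  | cons hab ht ih =>
    exact List.Forall₂.cons (hfg _ (List.mem_cons_self) _ hab)
      (ih fun a ha b hb => hfg a (List.mem_cons_of_mem _ ha) b hb)

/-! ### Par closed under lift -/

theorem parLift {M M' : Term} (h : Par M M') (d : ℕ) : Par (lift d M) (lift d M') := by
  cases h with
  | @var x Ms Ms' hMs =>
    rw [lift_appList, lift_appList]
    have hy : ∃ y, lift d (var x) = var y := by
      simp only [lift]; split_ifs <;> exact ⟨_, rfl⟩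
    obtain ⟨y, hy⟩ := hy
    rw [hy]
    exact Par.var y (forall₂_map hMs (fun a ha b hab => parLift hab d))
  | @lam M0 M0' Ms Ms' hM hMs =>
    rw [lift_appList, lift_appList]
    exact Par.lam (parLift hM (d+1)) (forall₂_map hMs (fun a ha b hab => parLift hab d))
  | @beta M0 M0' V V' Ms Ms' hv hv' hM hV hMs =>
    rw [lift_appList, lift_appList, lift_subst_high M0' V' (Nat.zero_le d)]
    exact Par.beta (isValue_lift hv d) (isValue_lift hv' d) (parLift hM (d+1)) (parLift hV d)
      (forall₂_map hMs (fun a ha b hab => parLift hab d))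
  | @sigma1 M0 M0' N0 N0' L0 L0' Ms Ms' hM hN hL hMs =>
    rw [lift_appList, lift_appList]
    simp only [lift]
    rw [← lift_lift L0' (Nat.zero_le d)]
    exact Par.sigma1 (parLift hM (d+1)) (parLift hN d) (parLift hL d)
      (forall₂_map hMs (fun a ha b hab => parLift hab d))
  | @sigma3 V0 V0' L0 L0' N0 N0' Ms Ms' hv hv' hV hL hN hMs =>
    rw [lift_appList, lift_appList]
    simp only [lift]
    rw [← lift_lift V0' (Nat.zero_le d)]
    exact Par.sigma3 (isValue_lift hv d) (isValue_lift hv' d) (parLift hV d)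
      (parLift hL (d+1)) (parLift hN d)
      (forall₂_map hMs (fun a ha b hab => parLift hab d))
termination_by size M
decreasing_by
  all_goals first
    | exact size_mem_lt _ ‹_›
    | exact size_head_lt _ (by simp only [size]; omega)

/-! ### Par closed under substitution -/

theorem parSubst {M M' : Term} (h : Par M M') {V V' : Term} (hv : isValue V) (hv' : isValue V')
    (hVV : Par V V') (k : ℕ) : Par (subst M k V) (subst M' k V') := by
  cases h with
  | @var x Ms Ms' hMs =>
    rw [subst_appList, subst_appList]
    refine parAppList ?_ (forall₂_map hMs (fun a ha b hab => parSubst hab hv hv' hVV k))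
    simp only [subst]
    split_ifs
    · exact hVV
    · exact Par.var _ List.Forall₂.nil
    · exact Par.var _ List.Forall₂.nil
  | @lam M0 M0' Ms Ms' hM hMs =>
    rw [subst_appList, subst_appList]
    exact Par.lam (parSubst hM (isValue_lift hv 0) (isValue_lift hv' 0) (parLift hVV 0) (k+1))
      (forall₂_map hMs (fun a ha b hab => parSubst hab hv hv' hVV k))
  | @beta M0 M0' V0 V0' Ms Ms' hw hw' hM hV0 hMs =>
    rw [subst_appList, subst_appList, subst_subst M0' V0' V' (Nat.zero_le k)]
    exact Par.beta (isValue_subst hw hv k) (isValue_subst hw' hv' k)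
      (parSubst hM (isValue_lift hv 0) (isValue_lift hv' 0) (parLift hVV 0) (k+1))
      (parSubst hV0 hv hv' hVV k)
      (forall₂_map hMs (fun a ha b hab => parSubst hab hv hv' hVV k))
  | @sigma1 M0 M0' N0 N0' L0 L0' Ms Ms' hM hN hL hMs =>
    rw [subst_appList, subst_appList]
    simp only [subst]
    rw [← lift_subst_low L0' V' (Nat.zero_le k)]
    exact Par.sigma1
      (parSubst hM (isValue_lift hv 0) (isValue_lift hv' 0) (parLift hVV 0) (k+1))
      (parSubst hN hv hv' hVV k) (parSubst hL hv hv' hVV k)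
      (forall₂_map hMs (fun a ha b hab => parSubst hab hv hv' hVV k))
  | @sigma3 V0 V0' L0 L0' N0 N0' Ms Ms' hw hw' hV0 hL hN hMs =>
    rw [subst_appList, subst_appList]
    simp only [subst]
    rw [← lift_subst_low V0' V' (Nat.zero_le k)]
    exact Par.sigma3 (isValue_subst hw hv k) (isValue_subst hw' hv' k)
      (parSubst hV0 hv hv' hVV k)
      (parSubst hL (isValue_lift hv 0) (isValue_lift hv' 0) (parLift hVV 0) (k+1))
      (parSubst hN hv hv' hVV k)
      (forall₂_map hMs (fun a ha b hab => parSubst hab hv hv' hVV k))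
termination_by size M
decreasing_by
  all_goals first
    | exact size_mem_lt _ ‹_›
    | exact size_head_lt _ (by simp only [size]; omega)

/-! ### values and IPar -/

theorem par_value_ipar {V V' : Term} (hv : isValue V) (h : Par V V') : IPar V V' := by
  cases h with
  | var x hMs =>
    cases hMs with
    | nil => exact IPar.var x
    | cons hN ht => exact absurd hv (not_value_appList_app _ _ _)
  | lam hM hMs =>
    cases hMs with
    | nil => exact IPar.lam hM
    | cons hN ht => exact absurd hv (not_value_appList_app _ _ _)
  | beta _ _ _ _ _ => exact absurd hv (not_value_appList_app _ _ _)
  | sigma1 _ _ _ _ => exact absurd hv (not_value_appList_app _ _ _)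
  | sigma3 _ _ _ _ _ _ => exact absurd hv (not_value_appList_app _ _ _)

theorem iparSubst {N N' : Term} (h : IPar N N') {V V' : Term} (hv : isValue V)
    (hv' : isValue V') (hVV : Par V V') (k : ℕ) : IPar (subst N k V) (subst N' k V') := by
  cases h with
  | lam hP =>
    exact IPar.lam (parSubst hP (isValue_lift hv 0) (isValue_lift hv' 0) (parLift hVV 0) (k+1))
  | var x =>
    simp only [subst]
    split_ifs
    · exact par_value_ipar hv hVV
    · exact IPar.var _
    · exact IPar.var _
  | @right W W' N0 N0' Ms Ms' hW hW' hWp hN hMs =>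
    rw [subst_appList, subst_appList]
    exact IPar.right (isValue_subst hW hv k) (isValue_subst hW' hv' k)
      (parSubst hWp hv hv' hVV k) (iparSubst hN hv hv' hVV k)
      (forall₂_map hMs (fun a ha b hab => parSubst hab hv hv' hVV k))
termination_by size N
decreasing_by
  all_goals first
    | exact size_mem_lt _ ‹_›
    | exact size_head_lt _ (by simp only [size]; omega)

/-! ### head steps: congruences -/

theorem headBeta_appList {A B : Term} (h : HeadBeta A B) (Ms : List Term) :
    HeadBeta (appList A Ms) (appList B Ms) := by
  cases h with
  | beta M V Ns hv =>
    rw [← appList_append, ← appList_append]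
    exact HeadBeta.beta M V (Ns ++ Ms) hv
  | right V Ns hv hN =>
    rw [← appList_append, ← appList_append]
    exact HeadBeta.right V (Ns ++ Ms) hv hN

theorem headSigma_appList {A B : Term} (h : HeadSigma A B) (Ms : List Term) :
    HeadSigma (appList A Ms) (appList B Ms) := by
  cases h with
  | sigma1 M N L Ns =>
    rw [← appList_append, ← appList_append]
    exact HeadSigma.sigma1 M N L (Ns ++ Ms)
  | sigma3 V L N Ns hv =>
    rw [← appList_append, ← appList_append]
    exact HeadSigma.sigma3 V L N (Ns ++ Ms) hv
  | right V Ns hv hN =>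
    rw [← appList_append, ← appList_append]
    exact HeadSigma.right V (Ns ++ Ms) hv hN

theorem headBeta_subst {A B : Term} (h : HeadBeta A B) {V : Term} (hv : isValue V) :
    HeadBeta (subst A 0 V) (subst B 0 V) := by
  induction h with
  | beta M W Ns hw =>
    rw [subst_appList, subst_appList, subst_subst M W V (le_refl 0)]
    exact HeadBeta.beta _ _ _ (isValue_subst hw hv 0)
  | right W Ns hw hN ih =>
    rw [subst_appList, subst_appList]
    exact HeadBeta.right _ _ (isValue_subst hw hv 0) ih

theorem headSigma_subst {A B : Term} (h : HeadSigma A B) {V : Term} (hv : isValue V) :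
    HeadSigma (subst A 0 V) (subst B 0 V) := by
  induction h with
  | sigma1 M N L Ns =>
    rw [subst_appList, subst_appList]
    simp only [subst]
    rw [← lift_subst_low L V (le_refl 0)]
    exact HeadSigma.sigma1 _ _ _ _
  | sigma3 W L N Ns hw =>
    rw [subst_appList, subst_appList]
    simp only [subst]
    rw [← lift_subst_low W V (le_refl 0)]
    exact HeadSigma.sigma3 _ _ _ _ (isValue_subst hw hv 0)
  | right W Ns hw hN ih =>
    rw [subst_appList, subst_appList]
    exact HeadSigma.right _ _ (isValue_subst hw hv 0) ih

theorem headSigma_isApp {X Y : Term} (h : HeadSigma X Y) : isApp Y := by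
  cases h <;> exact isApp_appList_app _ _ _

theorem rtg_sigma_cases {X Y : Term} (h : Relation.ReflTransGen HeadSigma X Y) :
    X = Y ∨ isApp Y := by
  induction h with
  | refl => exact Or.inl rfl
  | tail _ hs _ => exact Or.inr (headSigma_isApp hs)

theorem ipar_appList {A A' : Term} (h : IPar A A') (hA : isApp A) {Ms Ms' : List Term}
    (hMs : List.Forall₂ Par Ms Ms') : IPar (appList A Ms) (appList A' Ms') := by
  cases h with
  | lam _ => exact hA.elim
  | var x => exact hA.elim
  | right hW hW' hWp hN hMs0 =>
    rw [← appList_append, ← appList_append]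
    exact IPar.right hW hW' hWp hN (List.rel_append hMs0 hMs)

/-! ### assembling the decomposition -/

theorem assemble {W W' N0 N0' L0 K0 : Term} {rest rest' : List Term}
    (hw : isValue W) (hw' : isValue W') (hWW : Par W W')
    (h1 : Relation.ReflTransGen HeadBeta N0 L0) (h2 : Relation.ReflTransGen HeadSigma L0 K0)
    (h3 : IPar K0 N0') (hrest : List.Forall₂ Par rest rest') :
    ∃ L N, Relation.ReflTransGen HeadBeta (appList (app W N0) rest) L ∧
      Relation.ReflTransGen HeadSigma L N ∧ IPar N (appList (app W' N0') rest') :=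
  ⟨appList (app W L0) rest, appList (app W K0) rest,
   Relation.ReflTransGen.lift (fun X => appList (app W X) rest)
     (fun _ _ hab => HeadBeta.right W rest hw hab) _ _ h1,
   Relation.ReflTransGen.lift (fun X => appList (app W X) rest)
     (fun _ _ hab => HeadSigma.right W rest hw hab) _ _ h2,
   IPar.right hw hw' hWW h3 hrest⟩

theorem finish_decomp {A A' : Term} (hI : IPar A A') {Ms Ms' : List Term}
    (hMs : List.Forall₂ Par Ms Ms')
    (hrec : ∀ P ∈ Ms, ∀ P', Par P P' →
      ∃ L N, Relation.ReflTransGen HeadBeta P L ∧ Relation.ReflTransGen HeadSigma L N ∧ IPar N P') :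
    ∃ L N, Relation.ReflTransGen HeadBeta (appList A Ms) L ∧
      Relation.ReflTransGen HeadSigma L N ∧ IPar N (appList A' Ms') := by
  cases hI with
  | @right W W' Q Q' Ns Ns' hW hW' hWp hQ hNs =>
    refine ⟨_, _, Relation.ReflTransGen.refl, Relation.ReflTransGen.refl, ?_⟩
    rw [← appList_append, ← appList_append]
    exact IPar.right hW hW' hWp hQ (List.rel_append hNs hMs)
  | var x =>
    cases hMs with
    | nil => exact ⟨_, _, Relation.ReflTransGen.refl, Relation.ReflTransGen.refl, IPar.var x⟩
    | @cons N0 N0' rest rest' hN hrest =>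
      obtain ⟨L0, K0, h1, h2, h3⟩ := hrec N0 (List.mem_cons_self) N0' hN
      exact assemble trivial trivial (Par.var x List.Forall₂.nil) h1 h2 h3 hrest
  | @lam P P' hP =>
    cases hMs with
    | nil => exact ⟨_, _, Relation.ReflTransGen.refl, Relation.ReflTransGen.refl, IPar.lam hP⟩
    | @cons N0 N0' rest rest' hN hrest =>
      obtain ⟨L0, K0, h1, h2, h3⟩ := hrec N0 (List.mem_cons_self) N0' hN
      exact assemble trivial trivial (Par.lam hP List.Forall₂.nil) h1 h2 h3 hrest

/-! ### the key lemma -/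

theorem key_aux {M M2 : Term} (h : Par M M2) :
    ∃ L N, Relation.ReflTransGen HeadBeta M L ∧ Relation.ReflTransGen HeadSigma L N ∧
      IPar N M2 := by
  cases h with
  | @var x Ms Ms' hMs =>
    exact finish_decomp (IPar.var x) hMs (fun P hP P' hPP => key_aux hPP)
  | @lam M0 M0' Ms Ms' hM hMs =>
    exact finish_decomp (IPar.lam hM) hMs (fun P hP P' hPP => key_aux hPP)
  | @beta M0 M0' V V' Ms Ms' hv hv' hM hV hMs =>
    obtain ⟨L0, K0, h1, h2, h3⟩ := key_aux hM
    have step1 : HeadBeta (appList (app (lam M0) V) Ms) (appList (subst M0 0 V) Ms) :=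
      HeadBeta.beta M0 V Ms hv
    have hseqβ : Relation.ReflTransGen HeadBeta (appList (subst M0 0 V) Ms)
        (appList (subst L0 0 V) Ms) :=
      Relation.ReflTransGen.lift (fun X => appList (subst X 0 V) Ms)
        (fun _ _ hab => headBeta_appList (headBeta_subst hab hv) Ms) _ _ h1
    have hseqσ0 : Relation.ReflTransGen HeadSigma (subst L0 0 V) (subst K0 0 V) :=
      Relation.ReflTransGen.lift (fun X => subst X 0 V)
        (fun _ _ hab => headSigma_subst hab hv) _ _ h2
    have hI : IPar (subst K0 0 V) (subst M0' 0 V') := iparSubst h3 hv hv' hV 0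
    rcases rtg_sigma_cases hseqσ0 with heq | happ
    · obtain ⟨L, N, f1, f2, f3⟩ := finish_decomp hI hMs (fun P hP P' hPP => key_aux hPP)
      refine ⟨L, N, ?_, f2, f3⟩
      exact (Relation.ReflTransGen.head step1 hseqβ).trans (by rw [heq]; exact f1)
    · refine ⟨_, _, Relation.ReflTransGen.head step1 hseqβ, ?_, ipar_appList hI happ hMs⟩
      exact Relation.ReflTransGen.lift (fun X => appList X Ms)
        (fun _ _ hab => headSigma_appList hab Ms) _ _ hseqσ0
  | @sigma1 M0 M0' N0 N0' L0 L0' Ms Ms' hM hN hL hMs =>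
    obtain ⟨P, Q, h1, h2, h3⟩ := key_aux hN
    refine ⟨appList (app (app (lam M0) P) L0) Ms,
      appList (app (lam (app M0 (lift 0 L0))) Q) Ms, ?_, ?_, ?_⟩
    · exact Relation.ReflTransGen.lift (fun X => appList (app (app (lam M0) X) L0) Ms)
        (fun _ _ hab => HeadBeta.right (lam M0) (L0 :: Ms) trivial hab) _ _ h1
    · exact (Relation.ReflTransGen.lift (fun X => appList (app (app (lam M0) X) L0) Ms)
        (fun _ _ hab => HeadSigma.right (lam M0) (L0 :: Ms) trivial hab) _ _ h2).tail
        (HeadSigma.sigma1 M0 Q L0 Ms)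
    · exact IPar.right trivial trivial (Par.lam (parApp hM (parLift hL 0)) List.Forall₂.nil)
        h3 hMs
  | @sigma3 V0 V0' L0 L0' N0 N0' Ms Ms' hv hv' hV hL hN hMs =>
    obtain ⟨P, Q, h1, h2, h3⟩ := key_aux hN
    refine ⟨appList (app V0 (app (lam L0) P)) Ms,
      appList (app (lam (app (lift 0 V0) L0)) Q) Ms, ?_, ?_, ?_⟩
    · exact Relation.ReflTransGen.lift (fun X => appList (app V0 (app (lam L0) X)) Ms)
        (fun _ _ hab => HeadBeta.right V0 Ms hv (HeadBeta.right (lam L0) [] trivial hab)) _ _ h1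
    · exact (Relation.ReflTransGen.lift (fun X => appList (app V0 (app (lam L0) X)) Ms)
        (fun _ _ hab => HeadSigma.right V0 Ms hv (HeadSigma.right (lam L0) [] trivial hab)) _ _ h2).tail
        (HeadSigma.sigma3 V0 L0 Q Ms hv)
    · exact IPar.right trivial trivial (Par.lam (parApp (parLift hV 0) hL) List.Forall₂.nil)
        h3 hMs
termination_by size M
decreasing_by
  all_goals first
    | exact size_mem_lt _ ‹_›
    | exact size_head_lt _ (by simp only [size]; omega)

end Term

open Term Relation in
theorem key_lemma {M M2 : Term} (h : Par M M2) :
    ∃ L N, ReflTransGen HeadBeta M L ∧ ReflTransGen HeadSigma L N ∧ IPar N M2 := key_aux h
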